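/- Define the minimal trees by 𝒯_0 = ∅, 𝒯_{ξ+1} = {(ξ+1)} ∪ {(ξ+1)⌢t : t ∈ 𝒯_ξ}, and 𝒯_λ = ⋃_{ζ<λ} 𝒯_{ζ+1} for limit λ. Then for every ordinal ξ, 𝒯_ξ is a B-tree on [1,ξ] of order exactly ξ. -/

import Mathlib

open Ordinal

/-- `s` is a proper initial segment of `t`. -/
def ProperPrefix {S : Type*} (s t : List S) : Prop := s <+: t ∧ s ≠ t

/-- The maximal elements of a set of finite sequences with respect to the
proper-initial-segment order. -/
def maxElems {S : Type*} (T : Set (List S)) : Set (List S) :=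
  {t ∈ T | ¬ ∃ u ∈ T, ProperPrefix t u}

/-- The derived tree: remove the maximal elements. -/
def derivTree {S : Type*} (T : Set (List S)) : Set (List S) :=
  {t ∈ T | ∃ u ∈ T, ProperPrefix t u}

/-- Transfinite iterates of the derivation: `d^0 T = T`, `d^(ξ+1) T = (d^ξ T)'`,
and intersections at limit stages. -/
noncomputable def derivIter {S : Type*} (T : Set (List S)) (ξ : Ordinal) : Set (List S) :=
  Ordinal.limitRecOn ξ T (fun _ ih => derivTree ih)
    (fun o _ ih => ⋂ (ζ : Set.Iio o), ih ζ.1 ζ.2)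

/-- A tree on `S`: a set of finite sequences closed under initial segments. -/
def IsTree {S : Type*} (T : Set (List S)) : Prop :=
  ∀ ⦃s t : List S⦄, s <+: t → t ∈ T → s ∈ T

/-- A `B`-tree on `S`: a set of nonempty finite sequences which becomes a tree
after adjoining the empty sequence. -/
def IsBTree {S : Type*} (T : Set (List S)) : Prop :=
  [] ∉ T ∧ ∀ ⦃s t : List S⦄, s ≠ [] → s <+: t → t ∈ T → s ∈ T

/-- `T` has order exactly `ξ`: `ξ` is the least ordinal whose derived tree is empty. -/
def hasOrder {S : Type*} (T : Set (List S)) (ξ : Ordinal) : Prop :=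
  derivIter T ξ = ∅ ∧ ∀ ζ < ξ, derivIter T ζ ≠ ∅

/-- The minimal trees: `𝒯_0 = ∅`, `𝒯_(ξ+1) = {(ξ+1)} ∪ {(ξ+1)⌢t : t ∈ 𝒯_ξ}`,
and `𝒯_λ = ⋃_(ζ<λ) 𝒯_(ζ+1)` at limits. -/
noncomputable def minTree (ξ : Ordinal) : Set (List Ordinal) :=
  Ordinal.limitRecOn ξ ∅
    (fun ζ ih => {l : List Ordinal | l = [Order.succ ζ] ∨ ∃ t ∈ ih, l = Order.succ ζ :: t})
    (fun o ho ih => ⋃ (ζ : Set.Iio o), ih (Order.succ ζ.1) (ho.succ_lt ζ.2))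

/-! ### Auxiliary lemmas -/

theorem minTree_zero' : minTree 0 = ∅ := Ordinal.limitRecOn_zero ..

theorem minTree_succ' (ζ : Ordinal) : minTree (Order.succ ζ) =
    {l : List Ordinal | l = [Order.succ ζ] ∨ ∃ t ∈ minTree ζ, l = Order.succ ζ :: t} :=
  Ordinal.limitRecOn_succ ..

theorem minTree_limit' (o : Ordinal) (ho : Order.IsSuccLimit o) : minTree o =
    ⋃ (ζ : Set.Iio o), minTree (Order.succ ζ.1) := by
  rw [minTree, Ordinal.limitRecOn_limit _ _ _ _ ho]
  rfl

theorem derivIter_zero' {S : Type*} (T : Set (List S)) : derivIter T 0 = T :=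
  Ordinal.limitRecOn_zero ..

theorem derivIter_succ' {S : Type*} (T : Set (List S)) (η : Ordinal) :
    derivIter T (Order.succ η) = derivTree (derivIter T η) :=
  Ordinal.limitRecOn_succ ..

theorem derivIter_limit' {S : Type*} (T : Set (List S)) (o : Ordinal) (ho : Order.IsSuccLimit o) :
    derivIter T o = ⋂ (ζ : Set.Iio o), derivIter T ζ.1 := by
  rw [derivIter, Ordinal.limitRecOn_limit _ _ _ _ ho]
  rfl

theorem lstD_cons_ne {a : Ordinal} {l : List Ordinal} (h : l ≠ []) :
    (a :: l).getLastD 0 = l.getLastD 0 := by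
  rw [List.getLastD_cons]
  cases l with
  | nil => exact absurd rfl h
  | cons b t => rw [List.getLastD_cons, List.getLastD_cons]

theorem lstD_mem {l : List Ordinal} (h : l ≠ []) : l.getLastD 0 ∈ l := by
  cases l with
  | nil => exact absurd rfl h
  | cons a t =>
    rw [List.getLastD_cons]
    exact List.getLastD_mem_cons (l := t) (a := a)

theorem lstD_append {l r : List Ordinal} (hr : r ≠ []) :
    (l ++ r).getLastD 0 = r.getLastD 0 := by
  induction l with
  | nil => rfl
  | cons a l ih =>
    rw [List.cons_append, lstD_cons_ne (by simp [hr]), ih]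

/-- Structural facts about members of `minTree`. -/
theorem minTree_struct (ξ : Ordinal) : ∀ l ∈ minTree ξ,
    l ≠ [] ∧ l.Chain' (· > ·) ∧ ∀ x ∈ l, 1 ≤ x ∧ x ≤ ξ ∧ ∃ y, x = Order.succ y := by
  induction ξ using Ordinal.induction with
  | _ ξ IH =>
  rcases Ordinal.zero_or_succ_or_isSuccLimit ξ with rfl | ⟨ζ, rfl⟩ | ho
  · simp [minTree_zero']
  · intro l hl
    rw [minTree_succ'] at hl
    rcases hl with rfl | ⟨t, ht, rfl⟩
    · refine ⟨by simp, List.isChain_singleton _, ?_⟩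
      intro x hx
      simp only [List.mem_singleton] at hx
      subst hx
      exact ⟨Order.one_le_iff_pos.2 (Order.bot_lt_succ ζ), le_rfl, ζ, rfl⟩
    · obtain ⟨htne, htc, htm⟩ := IH ζ (Order.lt_succ ζ) t ht
      refine ⟨by simp, ?_, ?_⟩
      · refine List.isChain_cons.2 ?_
        refine ⟨?_, htc⟩
        intro b hb
        have hbmem : b ∈ t := by
          cases t with
          | nil => simp at hb
          | cons c t' => simp_all
        exact lt_of_le_of_lt (htm b hbmem).2.1 (Order.lt_succ ζ)
      · intro x hx
        rcases List.mem_cons.1 hx with rfl | hx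
        · exact ⟨Order.one_le_iff_pos.2 (Order.bot_lt_succ ζ), le_rfl, ζ, rfl⟩
        · obtain ⟨h1, h2, h3⟩ := htm x hx
          exact ⟨h1, h2.trans (le_of_lt (Order.lt_succ ζ)), h3⟩
  · intro l hl
    rw [minTree_limit' ξ ho] at hl
    obtain ⟨z, hl⟩ := Set.mem_iUnion.1 hl
    obtain ⟨h1, h2, h3⟩ := IH _ (ho.succ_lt z.2) l hl
    refine ⟨h1, h2, fun x hx => ?_⟩
    obtain ⟨hx1, hx2, hx3⟩ := h3 x hx
    exact ⟨hx1, hx2.trans (le_of_lt (ho.succ_lt z.2)), hx3⟩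

/-- `minTree ξ` is closed under nonempty prefixes. -/
theorem minTree_prefix (ξ : Ordinal) : ∀ ⦃s t : List Ordinal⦄, s ≠ [] → s <+: t →
    t ∈ minTree ξ → s ∈ minTree ξ := by
  induction ξ using Ordinal.induction with
  | _ ξ IH =>
  rcases Ordinal.zero_or_succ_or_isSuccLimit ξ with rfl | ⟨ζ, rfl⟩ | ho
  · simp [minTree_zero']
  · intro s t hs hp ht
    rw [minTree_succ'] at ht ⊢
    rcases ht with rfl | ⟨t', ht', rfl⟩
    · left
      cases s with
      | nil => exact absurd rfl hs
      | cons a s' =>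
        obtain ⟨ha, hp'⟩ := List.cons_prefix_cons.1 hp
        subst ha
        obtain ⟨r, hr⟩ := hp'
        have := congrArg List.length hr
        simp at this
        simp [this.1]
    · cases s with
      | nil => exact absurd rfl hs
      | cons a s' =>
        obtain ⟨ha, hp'⟩ := List.cons_prefix_cons.1 hp
        subst ha
        cases s' with
        | nil => left; rfl
        | cons b s'' =>
          right
          exact ⟨b :: s'', IH ζ (Order.lt_succ ζ) (by simp) hp' ht', rfl⟩
  · intro s t hs hp ht
    rw [minTree_limit' ξ ho] at ht ⊢
    obtain ⟨z, ht⟩ := Set.mem_iUnion.1 ht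
    exact Set.mem_iUnion.2 ⟨z, IH _ (ho.succ_lt z.2) hs hp ht⟩

/-- `minTree ξ` contains singletons with arbitrarily large entries below `ξ`. -/
theorem minTree_single (ξ : Ordinal) : ∀ ζ < ξ, ∃ a, ζ < a ∧ [a] ∈ minTree ξ := by
  rcases Ordinal.zero_or_succ_or_isSuccLimit ξ with rfl | ⟨z, rfl⟩ | ho
  · intro ζ hζ; exact absurd hζ (not_lt_of_ge (zero_le (a := ζ)))
  · intro ζ hζ
    refine ⟨Order.succ z, hζ, ?_⟩
    rw [minTree_succ']
    exact Or.inl rfl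
  · intro ζ hζ
    refine ⟨Order.succ ζ, Order.lt_succ ζ, ?_⟩
    rw [minTree_limit' ξ ho]
    refine Set.mem_iUnion.2 ⟨⟨ζ, hζ⟩, ?_⟩
    rw [minTree_succ']
    exact Or.inl rfl

/-- Members of `minTree ξ` whose last entry is big can be properly extended. -/
theorem minTree_extend (ξ : Ordinal) : ∀ l ∈ minTree ξ, ∀ η : Ordinal,
    Order.succ η < l.getLastD 0 → ∃ a, η < a ∧ l ++ [a] ∈ minTree ξ := by
  induction ξ using Ordinal.induction with
  | _ ξ IH =>
  rcases Ordinal.zero_or_succ_or_isSuccLimit ξ with rfl | ⟨ζ, rfl⟩ | ho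
  · simp [minTree_zero']
  · intro l hl η hη
    rw [minTree_succ'] at hl
    rcases hl with rfl | ⟨t, ht, rfl⟩
    · have hlast : ([Order.succ ζ] : List Ordinal).getLastD 0 = Order.succ ζ := rfl
      rw [hlast] at hη
      have hηζ : η < ζ := Order.succ_lt_succ_iff.1 hη
      obtain ⟨a, haη, ha⟩ := minTree_single ζ η hηζ
      refine ⟨a, haη, ?_⟩
      rw [minTree_succ']
      exact Or.inr ⟨[a], ha, rfl⟩
    · have htne : t ≠ [] := (minTree_struct ζ t ht).1
      rw [lstD_cons_ne htne] at hη
      obtain ⟨a, haη, ha⟩ := IH ζ (Order.lt_succ ζ) t ht η hη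
      refine ⟨a, haη, ?_⟩
      rw [minTree_succ']
      exact Or.inr ⟨t ++ [a], ha, rfl⟩
  · intro l hl η hη
    rw [minTree_limit' ξ ho] at hl ⊢
    obtain ⟨z, hl⟩ := Set.mem_iUnion.1 hl
    obtain ⟨a, haη, ha⟩ := IH _ (ho.succ_lt z.2) l hl η hη
    exact ⟨a, haη, Set.mem_iUnion.2 ⟨z, ha⟩⟩

/-- Proper extensions within a strictly decreasing list have smaller last entries. -/
theorem lst_lt_of_properPrefix {l u : List Ordinal} (hc : u.Chain' (· > ·))
    (hl : l ≠ []) (hp : l <+: u) (hne : l ≠ u) : u.getLastD 0 < l.getLastD 0 := by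
  obtain ⟨r, rfl⟩ := hp
  have hr : r ≠ [] := by rintro rfl; simp at hne
  have : IsTrans Ordinal.{u_1} (· > ·) := ⟨fun a b c h1 h2 => lt_trans h2 h1⟩
  have hpw := List.isChain_iff_pairwise.1 hc
  rw [List.pairwise_append] at hpw
  rw [lstD_append hr]
  exact hpw.2.2 _ (lstD_mem hl) _ (lstD_mem hr)

/-- The key invariant: the `η`-th derived tree of `minTree ξ` consists of the
members whose last entry exceeds `η`. -/
theorem derivIter_minTree (ξ : Ordinal) : ∀ η : Ordinal,
    derivIter (minTree ξ) η = {l | l ∈ minTree ξ ∧ η < l.getLastD 0} := by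
  intro η
  induction η using Ordinal.induction with
  | _ η IH =>
  rcases Ordinal.zero_or_succ_or_isSuccLimit η with rfl | ⟨ζ, rfl⟩ | ho
  · rw [derivIter_zero']
    ext l
    constructor
    · intro hl
      obtain ⟨hne, _, hm⟩ := minTree_struct ξ l hl
      have := (hm _ (lstD_mem hne)).1
      exact ⟨hl, lt_of_lt_of_le zero_lt_one this⟩
    · exact fun h => h.1
  · rw [derivIter_succ', IH ζ (Order.lt_succ ζ)]
    ext l
    constructor
    · rintro ⟨⟨hlT, _⟩, u, ⟨huT, hζu⟩, hpre, hne⟩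
      refine ⟨hlT, ?_⟩
      have hlne : l ≠ [] := (minTree_struct ξ l hlT).1
      have huc : u.Chain' (· > ·) := (minTree_struct ξ u huT).2.1
      have hlt := lst_lt_of_properPrefix huc hlne hpre hne
      exact lt_of_le_of_lt (Order.succ_le_of_lt hζu) hlt
    · rintro ⟨hlT, h⟩
      refine ⟨⟨hlT, lt_trans (Order.lt_succ ζ) h⟩, ?_⟩
      obtain ⟨a, haζ, ha⟩ := minTree_extend ξ l hlT ζ h
      refine ⟨l ++ [a], ⟨ha, ?_⟩, List.prefix_append l [a], ?_⟩
      · rw [List.getLastD_concat]; exact haζ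
      · intro hcontra
        have := congrArg List.length hcontra
        simp at this
  · rw [derivIter_limit' _ _ ho]
    ext l
    rw [Set.mem_iInter]
    constructor
    · intro h
      have h0 : l ∈ minTree ξ ∧ (0 : Ordinal) < l.getLastD 0 := by
        have := h ⟨0, ho.pos⟩
        rwa [IH 0 ho.pos] at this
      refine ⟨h0.1, ?_⟩
      have hall : ∀ ζ < η, ζ < l.getLastD 0 := by
        intro ζ hζ
        have := h ⟨ζ, hζ⟩
        rw [IH ζ hζ] at this
        exact this.2
      have hle : η ≤ l.getLastD 0 := le_of_not_gt fun hlt => lt_irrefl _ (hall _ hlt)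
      rcases lt_or_eq_of_le hle with hlt | heq
      · exact hlt
      · exfalso
        obtain ⟨hne, _, hm⟩ := minTree_struct ξ l h0.1
        obtain ⟨_, _, y, hy⟩ := hm _ (lstD_mem hne)
        rw [← heq] at hy
        subst hy
        exact lt_irrefl _ (ho.succ_lt (Order.lt_succ y))
    · rintro ⟨hlT, h⟩ ζ
      rw [IH ζ.1 ζ.2]
      exact ⟨hlT, lt_trans ζ.2 h⟩

/-- For every ordinal `ξ`, the minimal tree `𝒯_ξ` is a `B`-tree on `[1,ξ]` of
order exactly `ξ`. -/
theorem minTree_isBTree_order (ξ : Ordinal) :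
    IsBTree (minTree ξ) ∧
    (∀ t ∈ minTree ξ, ∀ x ∈ t, x ∈ Set.Icc 1 ξ) ∧
    hasOrder (minTree ξ) ξ := by
  refine ⟨⟨fun h => (minTree_struct ξ [] h).1 rfl, minTree_prefix ξ⟩, ?_, ?_, ?_⟩
  · intro t ht x hx
    obtain ⟨h1, h2, _⟩ := (minTree_struct ξ t ht).2.2 x hx
    exact ⟨h1, h2⟩
  · rw [derivIter_minTree ξ ξ]
    rw [Set.eq_empty_iff_forall_notMem]
    rintro l ⟨hlT, hlt⟩
    obtain ⟨hne, _, hm⟩ := minTree_struct ξ l hlT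
    exact absurd hlt (not_lt_of_ge (hm _ (lstD_mem hne)).2.1)
  · intro ζ hζ
    obtain ⟨a, haζ, ha⟩ := minTree_single ξ ζ hζ
    rw [derivIter_minTree ξ ζ]
    intro hcontra
    rw [Set.eq_empty_iff_forall_notMem] at hcontra
    exact hcontra [a] ⟨ha, haζ⟩
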